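/- In the instance with agents {a,b}, items {A,B,C} (item allocations per agent summing to 1, per item summing to at most 1), and values v_{a,A}=1, v_{a,B}=2, v_{b,B}=2, v_{b,C}=1 (others 0), the allocation p_{a,A}=p_{a,B}=1/2, p_{b,B}=p_{b,C}=1/2 maximizes the product of utilities; consequently agent b's utility is 3/2, which is a factor 4/3 smaller than her utility 2 in the three-agent NSW solution that also included agent c with v_{c,C}=1. -/
import Mathlib


/-- A stochastic matching for 2 agents over 3 items: nonnegative entries, each agent
row summing to `1`, each item column summing to at most `1`. -/
def IsStochMatching23 (p : Matrix (Fin 2) (Fin 3) ℝ) : Prop :=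
  (∀ i j, 0 ≤ p i j) ∧ (∀ i, ∑ j, p i j = 1) ∧ (∀ j, ∑ i, p i j ≤ 1)

/-- The expected utility of agent `i` under `p` with values `v`. -/
def utility23 (v p : Matrix (Fin 2) (Fin 3) ℝ) (i : Fin 2) : ℝ :=
  ∑ j, v i j * p i j

/-- Values of the two-agent instance (agent `c` removed): `v_{a,A}=1, v_{a,B}=2,
v_{b,B}=2, v_{b,C}=1`, other values `0`. -/
def vAB : Matrix (Fin 2) (Fin 3) ℝ :=
  !![1, 2, 0; 0, 2, 1]

/-- After removing agent `c` from the three-agent instance, the allocation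
`p_{a,A}=p_{a,B}=1/2`, `p_{b,B}=p_{b,C}=1/2` maximizes the product of utilities;
agent `b`'s utility is `3/2`, a factor `4/3` smaller than her utility `2` in the
three-agent NSW solution, so the Nash bargaining solution violates population
monotonicity by a factor of at least `4/3`. -/
theorem nsw_population_nonmonotone_example (p : Matrix (Fin 2) (Fin 3) ℝ)
    (hp : p = !![1/2, 1/2, 0; 0, 1/2, 1/2]) :
    IsStochMatching23 p ∧
      (∀ q : Matrix (Fin 2) (Fin 3) ℝ, IsStochMatching23 q →
        utility23 vAB q 0 * utility23 vAB q 1 ≤ utility23 vAB p 0 * utility23 vAB p 1) ∧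
      utility23 vAB p 1 = 3 / 2 ∧ (2 : ℝ) = (4 / 3) * (3 / 2) := by
  subst hp
  refine ⟨⟨?_, ?_, ?_⟩, ?_, ?_, by norm_num⟩
  · intro i j; fin_cases i <;> fin_cases j <;> norm_num
  · intro i; fin_cases i <;> simp [Fin.sum_univ_three] <;> norm_num
  · intro j; fin_cases j <;> simp [Fin.sum_univ_two] <;> norm_num
  · rintro q ⟨hnn, hrow, hcol⟩
    have h0 := hrow 0
    have h1 := hrow 1
    have hc1 := hcol 1
    simp [Fin.sum_univ_three, Fin.sum_univ_two] at h0 h1 hc1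
    have n00 := hnn 0 0; have n01 := hnn 0 1; have n02 := hnn 0 2
    have n10 := hnn 1 0; have n11 := hnn 1 1; have n12 := hnn 1 2
    simp [utility23, vAB, Fin.sum_univ_three]
    nlinarith [sq_nonneg (q 0 1 - q 1 1), sq_nonneg (q 0 1 + q 1 1 - 1)]
  · simp [utility23, vAB, Fin.sum_univ_three]
    norm_num
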